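/- arXiv:2005.05259 — 2 statements merged into one kernel-verified Lean document; each statement's English description precedes it below -/
import Mathlib

section
/- For all real numbers s1, s2 ≥ 0 and every γ > 0, one has (s1 - s2)·(s1^γ - s2^γ) ≥ (4γ/(γ+1)²)·(s1^{(γ+1)/2} - s2^{(γ+1)/2})². -/
open intervalIntegral Real

set_option maxHeartbeats 1000000 in
private lemma key (s1 s2 γ : ℝ) (hs2 : 0 ≤ s2) (hle : s2 ≤ s1) (hγ : 0 < γ) :
    (s1 - s2) * (s1 ^ γ - s2 ^ γ) ≥
      (4 * γ / (γ + 1) ^ 2) * (s1 ^ ((γ + 1) / 2) - s2 ^ ((γ + 1) / 2)) ^ 2 := by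
  rcases eq_or_lt_of_le hle with h | h
  · subst h; simp
  have hs1 : 0 < s1 := lt_of_le_of_lt hs2 h
  set m : ℝ := (γ + 1) / 2 with hm
  have hmpos : 0 < m := by positivity
  have hA : 0 < s1 - s2 := by linarith
  have hBγ : s2 ^ γ < s1 ^ γ := Real.rpow_lt_rpow hs2 h hγ
  have hCm : s2 ^ m ≤ s1 ^ m := Real.rpow_le_rpow hs2 hle hmpos.le
  set A : ℝ := s1 - s2 with hAdef
  set B : ℝ := (s1 ^ γ - s2 ^ γ) / γ with hBdef
  set C : ℝ := (s1 ^ m - s2 ^ m) / m with hCdef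
  have hBpos : 0 < B := by apply div_pos; linarith; exact hγ
  have hCnn : 0 ≤ C := by apply div_nonneg; linarith; exact hmpos.le
  -- integral identities
  have hint1 : ∫ x in s2..s1, x ^ (γ - 1) = B := by
    rw [integral_rpow (Or.inl (by linarith))]
    rw [hBdef]; ring_nf
  have hint2 : ∫ x in s2..s1, x ^ ((γ - 1) / 2) = C := by
    rw [integral_rpow (Or.inl (by linarith))]
    rw [hCdef, hm]; ring_nf
  set lam : ℝ := Real.sqrt B / Real.sqrt A with hlam
  have hsA : 0 < Real.sqrt A := Real.sqrt_pos.mpr hA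
  have hsB : 0 < Real.sqrt B := Real.sqrt_pos.mpr hBpos
  have hlampos : 0 < lam := div_pos hsB hsA
  -- pointwise bound
  have hpt : ∀ x ∈ Set.Icc s2 s1, x ^ ((γ - 1) / 2) ≤ (lam + x ^ (γ - 1) / lam) / 2 := by
    intro x hx
    rcases eq_or_lt_of_le (le_trans hs2 hx.1) with hx0 | hx0
    · rw [← hx0]
      rcases eq_or_ne (γ - 1) 0 with he | he
      · rw [he]
        norm_num
        have h1 : lam⁻¹ * lam = 1 := inv_mul_cancel₀ hlampos.ne'
        nlinarith [sq_nonneg (lam - 1), hlampos, h1]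
      · rw [Real.zero_rpow he, Real.zero_rpow (div_ne_zero he two_ne_zero)]
        positivity
    · have hsq : x ^ ((γ - 1) / 2) = Real.sqrt (x ^ (γ - 1)) := by
        rw [Real.sqrt_eq_rpow, ← Real.rpow_mul hx0.le]
        ring_nf
      set s := Real.sqrt (x ^ (γ - 1)) with hs
      have hsnn : 0 ≤ s := Real.sqrt_nonneg _
      have hss : s ^ 2 = x ^ (γ - 1) := Real.sq_sqrt (by positivity)
      rw [hsq, ← hss]
      have h1 : s ^ 2 / lam * lam = s ^ 2 := by field_simp
      nlinarith [sq_nonneg (lam - s), hlampos, h1]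
  have hi1 : IntervalIntegrable (fun x => x ^ ((γ - 1) / 2)) MeasureTheory.volume s2 s1 :=
    intervalIntegral.intervalIntegrable_rpow' (by linarith)
  have hi2 : IntervalIntegrable (fun x => (lam + x ^ (γ - 1) / lam) / 2) MeasureTheory.volume s2 s1 := by
    apply IntervalIntegrable.div_const
    exact (intervalIntegrable_const.add ((intervalIntegral.intervalIntegrable_rpow' (by linarith)).div_const _))
  have hmono := intervalIntegral.integral_mono_on hle hi1 hi2 hpt
  rw [hint2] at hmono
  have hint3 : ∫ x in s2..s1, (lam + x ^ (γ - 1) / lam) / 2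
      = ((s1 - s2) * lam + B / lam) / 2 := by
    rw [intervalIntegral.integral_div, intervalIntegral.integral_add intervalIntegrable_const
      ((intervalIntegral.intervalIntegrable_rpow' (by linarith)).div_const _),
      intervalIntegral.integral_const, intervalIntegral.integral_div, hint1]
    simp [smul_eq_mul]
    try ring
  rw [hint3] at hmono
  -- now C ≤ (A * lam + B / lam)/2 = sqrt A * sqrt B
  have hAeq : A = Real.sqrt A ^ 2 := (Real.sq_sqrt hA.le).symm
  have hBeq : B = Real.sqrt B ^ 2 := (Real.sq_sqrt hBpos.le).symm
  have e1 : A * lam = Real.sqrt A * Real.sqrt B := by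
    rw [hlam]
    field_simp
    linear_combination hAeq
  have e2 : B / lam = Real.sqrt A * Real.sqrt B := by
    rw [hlam]
    rw [div_div_eq_mul_div]
    field_simp
    linear_combination hBeq
  clear_value A B C lam m
  rw [← hAdef] at hmono
  have hC : C ≤ Real.sqrt A * Real.sqrt B := by linarith [hmono, e1, e2]
  have hC2 : C ^ 2 ≤ A * B := by
    nlinarith [hC, hCnn, Real.sqrt_nonneg A, Real.sqrt_nonneg B]
  -- final algebra
  have hγ1 : (γ + 1) ^ 2 ≠ 0 := by positivity
  have hfin : γ * (A * B) = A * (s1 ^ γ - s2 ^ γ) := by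
    rw [hBdef]; field_simp
  have hfin2 : (4 * γ / (γ + 1) ^ 2) * (s1 ^ m - s2 ^ m) ^ 2 = γ * C ^ 2 := by
    rw [hCdef]
    field_simp
    rw [hm]
    ring
  rw [ge_iff_le, hfin2]
  have := mul_le_mul_of_nonneg_left hC2 hγ.le
  linarith [this, hfin]

theorem stmt_0 (s1 s2 γ : ℝ) (hs1 : 0 ≤ s1) (hs2 : 0 ≤ s2) (hγ : 0 < γ) :
    (s1 - s2) * (s1 ^ γ - s2 ^ γ) ≥
      (4 * γ / (γ + 1) ^ 2) * (s1 ^ ((γ + 1) / 2) - s2 ^ ((γ + 1) / 2)) ^ 2 := by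
  rcases le_total s2 s1 with h | h
  · exact key s1 s2 γ hs2 h hγ
  · have := key s2 s1 γ hs1 h hγ
    have e1 : (s1 - s2) * (s1 ^ γ - s2 ^ γ) = (s2 - s1) * (s2 ^ γ - s1 ^ γ) := by ring
    have e2 : (s1 ^ ((γ + 1) / 2) - s2 ^ ((γ + 1) / 2)) ^ 2
        = (s2 ^ ((γ + 1) / 2) - s1 ^ ((γ + 1) / 2)) ^ 2 := by ring
    rw [ge_iff_le, e1, e2]
    exact this
end

section
/- Let N > 2s with 0 < s < 1, and define λ(α) = 4^s · Γ((N+2s+2α)/4) · Γ((N+2s-2α)/4) / (Γ((N-2s+2α)/4) · Γ((N-2s-2α)/4)) for α ∈ [0, (N-2s)/2). If λ(α) = λ(0) = 4^s Γ²((N+2s)/4)/Γ²((N-2s)/4) for some α in this interval, then α = 0. -/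
open Real Filter Topology

private lemma gamma_key (a b t : ℝ) (hb : 0 < b) (hba : b < a) (ht : 0 < t)
    (htb : t < b) :
    Gamma (a + t) * Gamma (a - t) * Gamma b ^ 2 <
      Gamma a ^ 2 * (Gamma (b + t) * Gamma (b - t)) := by
  have ha : 0 < a := hb.trans hba
  have hat : 0 < a - t := by nlinarith
  have hbt : 0 < b - t := by linarith
  have pos : ∀ (x : ℝ), 0 < x → ∀ j : ℕ, 0 < x + j := fun x hx j => by positivity
  set d : ℕ → ℝ := fun j =>
    ((a + j) ^ 2 * ((b + t + j) * (b - t + j))) /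
      (((a + t + j) * (a - t + j)) * (b + j) ^ 2) with hd
  have dpos : ∀ j, 0 < d j := by
    intro j
    have h1 := pos _ ha j; have h2 := pos _ hb j
    have h3 := pos _ hat j; have h4 := pos _ hbt j
    have h5 := pos _ (by linarith : (0:ℝ) < a + t) j
    have h6 := pos _ (by linarith : (0:ℝ) < b + t) j
    exact div_pos (mul_pos (pow_pos h1 2) (mul_pos h6 h4))
      (mul_pos (mul_pos h5 h3) (pow_pos h2 2))
  have dlt : ∀ j, d j < 1 := by
    intro j
    have h1 := pos _ ha j; have h2 := pos _ hb j
    have h3 := pos _ hat j; have h4 := pos _ hbt j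
    have h5 := pos _ (by linarith : (0:ℝ) < a + t) j
    rw [hd, div_lt_one (mul_pos (mul_pos h5 h3) (pow_pos h2 2))]
    have h7 : (b + (j:ℝ)) ^ 2 < (a + j) ^ 2 := by nlinarith
    nlinarith [mul_lt_mul_of_pos_left h7 (mul_pos ht ht)]
  set F : ℕ → ℝ := fun n =>
    GammaSeq (a + t) n * GammaSeq (a - t) n * GammaSeq b n ^ 2 /
      (GammaSeq a n ^ 2 * (GammaSeq (b + t) n * GammaSeq (b - t) n)) with hF
  have hGa := Real.Gamma_pos_of_pos ha
  have hGb := Real.Gamma_pos_of_pos hb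
  have hGat := Real.Gamma_pos_of_pos (by linarith : (0:ℝ) < a + t)
  have hGat' := Real.Gamma_pos_of_pos hat
  have hGbt := Real.Gamma_pos_of_pos (by linarith : (0:ℝ) < b + t)
  have hGbt' := Real.Gamma_pos_of_pos hbt
  have htend : Tendsto F atTop (𝓝 (Gamma (a + t) * Gamma (a - t) * Gamma b ^ 2 /
      (Gamma a ^ 2 * (Gamma (b + t) * Gamma (b - t))))) := by
    apply Tendsto.div
    · exact ((GammaSeq_tendsto_Gamma (a + t)).mul
        (GammaSeq_tendsto_Gamma (a - t))).mul ((GammaSeq_tendsto_Gamma b).pow 2)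
    · exact ((GammaSeq_tendsto_Gamma a).pow 2).mul
        ((GammaSeq_tendsto_Gamma (b + t)).mul (GammaSeq_tendsto_Gamma (b - t)))
    · positivity
  have hFeq : ∀ n : ℕ, 1 ≤ n → F n = ∏ j ∈ Finset.range (n + 1), d j := by
    intro n hn
    have hn0 : (0:ℝ) < n := by exact_mod_cast hn
    have hnt : (0:ℝ) < (n:ℝ) ^ t := rpow_pos_of_pos hn0 t
    have hna : (0:ℝ) < (n:ℝ) ^ a := rpow_pos_of_pos hn0 a
    have hnb : (0:ℝ) < (n:ℝ) ^ b := rpow_pos_of_pos hn0 b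
    have e1 : (n:ℝ) ^ (a + t) = (n:ℝ) ^ a * (n:ℝ) ^ t := rpow_add hn0 a t
    have e2 : (n:ℝ) ^ (a - t) = (n:ℝ) ^ a / (n:ℝ) ^ t := rpow_sub hn0 a t
    have e3 : (n:ℝ) ^ (b + t) = (n:ℝ) ^ b * (n:ℝ) ^ t := rpow_add hn0 b t
    have e4 : (n:ℝ) ^ (b - t) = (n:ℝ) ^ b / (n:ℝ) ^ t := rpow_sub hn0 b t
    have hprod : ∀ x : ℝ, 0 < x → (0:ℝ) < ∏ j ∈ Finset.range (n + 1), (x + j) :=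
      fun x hx => Finset.prod_pos fun j _ => pos x hx j
    have hne1 : (∏ j ∈ Finset.range (n + 1), (a + t + j)) ≠ 0 :=
      (hprod _ (by linarith)).ne'
    have hne2 : (∏ j ∈ Finset.range (n + 1), (a - t + j)) ≠ 0 := (hprod _ hat).ne'
    have hne3 : (∏ j ∈ Finset.range (n + 1), (b + j)) ≠ 0 := (hprod _ hb).ne'
    have hne4 : (∏ j ∈ Finset.range (n + 1), (a + j)) ≠ 0 := (hprod _ ha).ne'
    have hne5 : (∏ j ∈ Finset.range (n + 1), (b + t + j)) ≠ 0 :=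
      (hprod _ (by linarith)).ne'
    have hne6 : (∏ j ∈ Finset.range (n + 1), (b - t + j)) ≠ 0 := (hprod _ hbt).ne'
    have hfac : (n.factorial : ℝ) ≠ 0 := by positivity
    simp only [hF, GammaSeq, hd, e1, e2, e3, e4]
    rw [Finset.prod_div_distrib]
    simp only [Finset.prod_mul_distrib, Finset.prod_pow]
    field_simp
  have hbound : ∀ n : ℕ, 1 ≤ n → F n ≤ d 0 := by
    intro n hn
    rw [hFeq n hn, Finset.prod_range_succ']
    have h1 : (∏ i ∈ Finset.range n, d (i + 1)) ≤ 1 :=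
      Finset.prod_le_one (fun i _ => (dpos _).le) (fun i _ => (dlt _).le)
    have := mul_le_mul_of_nonneg_right h1 (dpos 0).le
    simpa using this
  have hQle : Gamma (a + t) * Gamma (a - t) * Gamma b ^ 2 /
      (Gamma a ^ 2 * (Gamma (b + t) * Gamma (b - t))) ≤ d 0 :=
    le_of_tendsto htend (eventually_atTop.mpr ⟨1, hbound⟩)
  have hQlt : Gamma (a + t) * Gamma (a - t) * Gamma b ^ 2 /
      (Gamma a ^ 2 * (Gamma (b + t) * Gamma (b - t))) < 1 :=
    lt_of_le_of_lt hQle (dlt 0)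
  rw [div_lt_one (by positivity)] at hQlt
  linarith

theorem stmt_7 (N s : ℝ) (hs0 : 0 < s) (hs1 : s < 1) (hN : 2 * s < N)
    (lam : ℝ → ℝ)
    (hlam : ∀ α, lam α = (4 : ℝ) ^ s *
      (Gamma ((N + 2 * s + 2 * α) / 4) * Gamma ((N + 2 * s - 2 * α) / 4)) /
      (Gamma ((N - 2 * s + 2 * α) / 4) * Gamma ((N - 2 * s - 2 * α) / 4)))
    (α : ℝ) (hα : α ∈ Set.Ico (0 : ℝ) ((N - 2 * s) / 2))
    (heq : lam α = lam 0) :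
    α = 0 := by
  by_contra hne
  obtain ⟨hα0, hαlt⟩ := hα
  have hαpos : 0 < α := lt_of_le_of_ne hα0 (Ne.symm hne)
  set a : ℝ := (N + 2 * s) / 4 with ha_def
  set b : ℝ := (N - 2 * s) / 4 with hb_def
  set t : ℝ := α / 2 with ht_def
  have hb : 0 < b := by rw [hb_def]; linarith
  have hba : b < a := by rw [ha_def, hb_def]; linarith
  have ht : 0 < t := by rw [ht_def]; linarith
  have htb : t < b := by rw [ht_def, hb_def]; linarith
  have key := gamma_key a b t hb hba ht htb
  have e1 : (N + 2 * s + 2 * α) / 4 = a + t := by rw [ha_def, ht_def]; ring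
  have e2 : (N + 2 * s - 2 * α) / 4 = a - t := by rw [ha_def, ht_def]; ring
  have e3 : (N - 2 * s + 2 * α) / 4 = b + t := by rw [hb_def, ht_def]; ring
  have e4 : (N - 2 * s - 2 * α) / 4 = b - t := by rw [hb_def, ht_def]; ring
  have e5 : (N + 2 * s + 2 * 0) / 4 = a := by rw [ha_def]; ring
  have e6 : (N + 2 * s - 2 * 0) / 4 = a := by rw [ha_def]; ring
  have e7 : (N - 2 * s + 2 * 0) / 4 = b := by rw [hb_def]; ring
  have e8 : (N - 2 * s - 2 * 0) / 4 = b := by rw [hb_def]; ring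
  rw [hlam α, hlam 0, e1, e2, e3, e4, e5, e6, e7, e8] at heq
  have hGa := Real.Gamma_pos_of_pos (hb.trans hba)
  have hGb := Real.Gamma_pos_of_pos hb
  have hGbt := Real.Gamma_pos_of_pos (by linarith : (0:ℝ) < b + t)
  have hGbt' := Real.Gamma_pos_of_pos (by linarith : (0:ℝ) < b - t)
  have h4s : (0:ℝ) < (4:ℝ) ^ s := by positivity
  have hlt : (4 : ℝ) ^ s * (Gamma (a + t) * Gamma (a - t)) /
      (Gamma (b + t) * Gamma (b - t)) <
      (4 : ℝ) ^ s * (Gamma a * Gamma a) / (Gamma b * Gamma b) := by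
    rw [div_lt_div_iff₀ (by positivity) (by positivity)]
    nlinarith [key, mul_pos hGbt hGbt']
  rw [heq] at hlt
  exact lt_irrefl _ hlt
end
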